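/- Let (S(t)) be a C₀-semigroup on H with generator A and let Q be a bounded self-adjoint nonnegative operator on H. Then the following are equivalent: (a) for every x ∈ dom(A*) one has Qx ∈ dom(A) and AQx = QA*x; (b) S(t)Q = QS(t)* for all t ≥ 0. -/

import Mathlib

/-!
STATEMENT 0.  Let (S(t)) be a C₀-semigroup on a separable real Hilbert space H with
generator A and let Q be a bounded self-adjoint nonnegative operator on H.  Then the
following are equivalent:
(a) for every x ∈ dom(A*) one has Qx ∈ dom(A) and AQx = QA*x;
(b) S(t)Q = QS(t)* for all t ≥ 0.

The generator is encoded by the predicate `genTo S x y`, meaning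
x ∈ dom(A) and Ax = y, i.e. (S(t)x − x)/t → y as t → 0⁺.
The adjoint of the (densely defined) generator is encoded by `adjTo S x z`, meaning
⟨Ay, x⟩ = ⟨y, z⟩ for all y ∈ dom(A); since dom(A) is dense, such z is unique, so
`adjTo S x z` means exactly x ∈ dom(A*) and A*x = z.
-/

open MeasureTheory Filter Set ContinuousLinearMap
open scoped RealInnerProductSpace

noncomputable section

variable {H : Type*} [NormedAddCommGroup H] [InnerProductSpace ℝ H] [CompleteSpace H]

/-- `x ∈ dom(A)` and `Ax = y` for the generator `A` of the semigroup `S`. -/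
def genTo (S : ℝ → H →L[ℝ] H) (x y : H) : Prop :=
  Filter.Tendsto (fun t : ℝ => t⁻¹ • (S t x - x)) (nhdsWithin 0 (Set.Ioi 0)) (nhds y)

/-- `x ∈ dom(A*)` and `A*x = z` for the adjoint of the generator of `S`
(the defining property of the adjoint of a densely defined operator). -/
def adjTo (S : ℝ → H →L[ℝ] H) (x z : H) : Prop :=
  ∀ y y' : H, genTo S y y' → ⟪y', x⟫ = ⟪y, z⟫

open scoped Topology

set_option synthInstance.maxHeartbeats 1000000
set_option maxHeartbeats 1000000

set_option linter.unusedSectionVars false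

namespace C0Aux

lemma tendsto_sub_right (s : ℝ) : Tendsto (fun u : ℝ => u - s) (𝓝[>] s) (𝓝[>] (0:ℝ)) := by
  refine tendsto_nhdsWithin_of_tendsto_nhds_of_eventually_within _ ?_ ?_
  · have h : Tendsto (fun u : ℝ => u - s) (𝓝 s) (𝓝 (s - s)) :=
      (continuous_id.sub continuous_const).tendsto s
    simpa using h.mono_left nhdsWithin_le_nhds
  · filter_upwards [eventually_mem_nhdsWithin] with u hu
    simpa [Set.mem_Ioi, sub_pos] using hu

lemma tendsto_add_left (t : ℝ) : Tendsto (fun h : ℝ => t + h) (𝓝[>] (0:ℝ)) (𝓝[>] t) := by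
  refine tendsto_nhdsWithin_of_tendsto_nhds_of_eventually_within _ ?_ ?_
  · have h : Tendsto (fun h : ℝ => t + h) (𝓝 0) (𝓝 (t + 0)) :=
      (continuous_const.add continuous_id).tendsto 0
    simpa using h.mono_left nhdsWithin_le_nhds
  · filter_upwards [eventually_mem_nhdsWithin] with u hu
    simpa using (lt_add_of_pos_right t hu)

variable {S : ℝ → H →L[ℝ] H}

lemma exists_bound (hScont : ∀ x : H, ContinuousOn (fun t => S t x) (Set.Ici 0)) (T : ℝ) :
    ∃ M : ℝ, 1 ≤ M ∧ ∀ s ∈ Set.Icc (0:ℝ) T, ‖S s‖ ≤ M := by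
  have h : ∀ x : H, ∃ C, ∀ i : Set.Icc (0:ℝ) T, ‖S i x‖ ≤ C := by
    intro x
    obtain ⟨C, hC⟩ := (isCompact_Icc (a := (0:ℝ)) (b := T)).exists_bound_of_continuousOn
      ((hScont x).mono (fun s hs => hs.1))
    exact ⟨C, fun i => hC i i.2⟩
  obtain ⟨C', hC'⟩ := banach_steinhaus (g := fun i : Set.Icc (0:ℝ) T => S i) h
  exact ⟨max C' 1, le_max_right _ _, fun s hs => le_trans (hC' ⟨s, hs⟩) (le_max_left _ _)⟩

lemma hasDerivWithinAt_of_genTo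
    (hSadd : ∀ s t : ℝ, 0 ≤ s → 0 ≤ t → S (s + t) = (S s).comp (S t))
    {x y : H} (hx : genTo S x y) {s : ℝ} (hs : 0 ≤ s) :
    HasDerivWithinAt (fun r => S r x) (S s y) (Set.Ioi s) s := by
  rw [hasDerivWithinAt_iff_tendsto_slope,
    Set.diff_singleton_eq_self (by simp : s ∉ Set.Ioi s)]
  have h1 : Tendsto (fun u : ℝ => (u - s)⁻¹ • (S (u - s) x - x)) (𝓝[>] s) (𝓝 y) :=
    hx.comp (tendsto_sub_right s)
  have h2 : Tendsto (fun u : ℝ => S s ((u - s)⁻¹ • (S (u - s) x - x))) (𝓝[>] s) (𝓝 (S s y)) :=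
    ((S s).continuous.tendsto y).comp h1
  refine h2.congr' ?_
  filter_upwards [eventually_mem_nhdsWithin] with u hu
  have hus : (0:ℝ) ≤ u - s := le_of_lt (sub_pos.2 hu)
  have hcomp : S u = (S s).comp (S (u - s)) := by
    have h := hSadd s (u - s) hs hus
    rwa [show s + (u - s) = u by ring] at h
  rw [slope_def_module]
  simp [hcomp, _root_.map_smul, map_sub]

lemma sub_eq_integral
    (hS0 : S 0 = 1)
    (hSadd : ∀ s t : ℝ, 0 ≤ s → 0 ≤ t → S (s + t) = (S s).comp (S t))
    (hScont : ∀ x : H, ContinuousOn (fun t => S t x) (Set.Ici 0))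
    {x y : H} (hx : genTo S x y) {t : ℝ} (ht : 0 ≤ t) :
    S t x - x = ∫ s in (0:ℝ)..t, S s y := by
  have hint : IntervalIntegrable (fun s => S s y) volume 0 t :=
    ((hScont y).mono (by rw [Set.uIcc_of_le ht]; exact fun s hs => hs.1)).intervalIntegrable
  have h := intervalIntegral.integral_eq_sub_of_hasDeriv_right_of_le ht
    (f := fun r => S r x) (f' := fun s => S s y)
    ((hScont x).mono (fun s hs => hs.1))
    (fun s hs => hasDerivWithinAt_of_genTo hSadd hx hs.1.le) hint
  rw [h, hS0]
  simp

lemma intervalIntegrable_of_continuousOn {f : ℝ → H} (hf : ContinuousOn f (Set.Ici 0))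
    {a b : ℝ} (ha : 0 ≤ a) (hb : 0 ≤ b) : IntervalIntegrable f volume a b := by
  refine (hf.mono ?_).intervalIntegrable
  intro s hs
  rcases le_total a b with h | h
  · rw [Set.uIcc_of_le h] at hs; exact le_trans ha hs.1
  · rw [Set.uIcc_of_ge h] at hs; exact le_trans hb hs.1

lemma integral_hasDerivWithinAt {f : ℝ → H} (hf : ContinuousOn f (Set.Ici 0))
    {b : ℝ} (hb : 0 ≤ b) :
    HasDerivWithinAt (fun u => ∫ s in (0:ℝ)..u, f s) (f b) (Set.Ici b) b := by
  refine intervalIntegral.integral_hasDerivWithinAt_right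
    (intervalIntegrable_of_continuousOn hf le_rfl hb) (s := Set.Ici b) (t := Set.Ioi b)
    ⟨Set.Ici 0, Filter.mem_of_superset self_mem_nhdsWithin
      (fun u (hu : u ∈ Set.Ioi b) => le_trans hb hu.le),
      hf.aestronglyMeasurable measurableSet_Ici⟩
    ((hf b hb).mono (fun u (hu : u ∈ Set.Ioi b) => le_trans hb hu.le))

/-- right-sided difference quotient of the primitive converges to `f b`. -/
lemma tendsto_slope_integral {f : ℝ → H} (hf : ContinuousOn f (Set.Ici 0))
    {b : ℝ} (hb : 0 ≤ b) :
    Tendsto (fun h : ℝ => h⁻¹ • ((∫ s in (0:ℝ)..(b+h), f s) - ∫ s in (0:ℝ)..b, f s))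
      (𝓝[>] (0:ℝ)) (𝓝 (f b)) := by
  have h1 := (integral_hasDerivWithinAt hf hb).mono (Set.Ioi_subset_Ici_self)
  rw [hasDerivWithinAt_iff_tendsto_slope,
    Set.diff_singleton_eq_self (by simp : b ∉ Set.Ioi b)] at h1
  have h2 := h1.comp (tendsto_add_left b)
  refine h2.congr ?_
  intro h
  simp [Function.comp, slope_def_module]

lemma genTo_integral
    (hS0 : S 0 = 1)
    (hSadd : ∀ s t : ℝ, 0 ≤ s → 0 ≤ t → S (s + t) = (S s).comp (S t))
    (hScont : ∀ x : H, ContinuousOn (fun t => S t x) (Set.Ici 0))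
    (w : H) {t : ℝ} (ht : 0 ≤ t) :
    genTo S (∫ u in (0:ℝ)..t, S u w) (S t w - w) := by
  set F : ℝ → H := fun r => ∫ u in (0:ℝ)..r, S u w with hF
  have hcw : ContinuousOn (fun u => S u w) (Set.Ici 0) := hScont w
  have key : ∀ h : ℝ, 0 < h → S h (F t) - F t = (F (t+h) - F t) - (F h - F 0) := by
    intro h hh
    have h1 : S h (F t) = ∫ u in (0:ℝ)..t, S h (S u w) :=
      ((S h).intervalIntegral_comp_comm (intervalIntegrable_of_continuousOn hcw le_rfl ht)).symm
    have h2 : (∫ u in (0:ℝ)..t, S h (S u w)) = ∫ u in (0:ℝ)..t, S (u + h) w := by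
      refine intervalIntegral.integral_congr (fun u hu => ?_)
      rw [Set.uIcc_of_le ht] at hu
      rw [show u + h = h + u by ring, hSadd h u hh.le hu.1]
      rfl
    have h3 : (∫ u in (0:ℝ)..t, S (u + h) w) = ∫ u in (0+h:ℝ)..(t+h), S u w :=
      intervalIntegral.integral_comp_add_right (fun u => S u w) h
    have h4 : (∫ u in (h:ℝ)..(0:ℝ), S u w) + (∫ u in (0:ℝ)..(t+h), S u w)
        = ∫ u in (h:ℝ)..(t+h), S u w :=
      intervalIntegral.integral_add_adjacent_intervals
        (intervalIntegrable_of_continuousOn hcw hh.le le_rfl)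
        (intervalIntegrable_of_continuousOn hcw le_rfl (by linarith))
    have hF0 : F 0 = 0 := intervalIntegral.integral_same
    rw [h1, h2, h3, show (0:ℝ)+h = h by ring, ← h4, hF0]
    have : (∫ u in (h:ℝ)..(0:ℝ), S u w) = - F h := intervalIntegral.integral_symm 0 h
    rw [this]
    abel
  have hA : Tendsto (fun h : ℝ => h⁻¹ • (F (t+h) - F t)) (𝓝[>] (0:ℝ)) (𝓝 (S t w)) :=
    tendsto_slope_integral hcw ht
  have hB' : Tendsto (fun h : ℝ => h⁻¹ • (F (0+h) - F 0)) (𝓝[>] (0:ℝ)) (𝓝 (S 0 w)) :=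
    tendsto_slope_integral hcw (le_refl (0:ℝ))
  rw [hS0] at hB'
  have hB : Tendsto (fun h : ℝ => h⁻¹ • (F h - F 0)) (𝓝[>] (0:ℝ)) (𝓝 w) := by
    simpa using hB'
  have hAB := hA.sub hB
  show Tendsto (fun h : ℝ => h⁻¹ • (S h (F t) - F t)) (𝓝[>] (0:ℝ)) (𝓝 (S t w - w))
  refine hAB.congr' ?_
  filter_upwards [eventually_mem_nhdsWithin] with h hh
  rw [key h hh]
  simp [smul_sub]

lemma inner_sub_eq_integral
    (hS0 : S 0 = 1)
    (hSadd : ∀ s t : ℝ, 0 ≤ s → 0 ≤ t → S (s + t) = (S s).comp (S t))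
    (hScont : ∀ x : H, ContinuousOn (fun t => S t x) (Set.Ici 0))
    {x z : H} (hx : adjTo S x z) (w : H) {t : ℝ} (ht : 0 ≤ t) :
    ⟪S t w - w, x⟫ = ∫ s in (0:ℝ)..t, ⟪S s w, z⟫ := by
  have h1 := hx _ _ (genTo_integral hS0 hSadd hScont w ht)
  rw [h1, real_inner_comm]
  have hc := (innerSL ℝ z).intervalIntegral_comp_comm
    (intervalIntegrable_of_continuousOn (hScont w) le_rfl ht)
  simp only [innerSL_apply_apply] at hc
  rw [← hc]
  exact intervalIntegral.integral_congr (fun s _ => real_inner_comm (S s w) z)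

lemma adjoint_sub_norm
    (hS0 : S 0 = 1)
    (hSadd : ∀ s t : ℝ, 0 ≤ s → 0 ≤ t → S (s + t) = (S s).comp (S t))
    (hScont : ∀ x : H, ContinuousOn (fun t => S t x) (Set.Ici 0))
    {x z : H} (hx : adjTo S x z) {t M : ℝ} (ht : 0 ≤ t) (hM0 : 0 ≤ M)
    (hM : ∀ s ∈ Set.Icc (0:ℝ) t, ‖S s‖ ≤ M) :
    ‖ContinuousLinearMap.adjoint (S t) x - x‖ ≤ M * ‖z‖ * t := by
  set v := ContinuousLinearMap.adjoint (S t) x - x with hv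
  have h1 : ⟪v, v⟫ = ⟪S t v - v, x⟫ := by
    rw [hv]
    simp only [map_sub, inner_sub_right (𝕜 := ℝ), inner_sub_left (𝕜 := ℝ),
      ContinuousLinearMap.adjoint_inner_right]
  have h2 : ⟪v, v⟫ = ∫ s in (0:ℝ)..t, ⟪S s v, z⟫ := by
    rw [h1]; exact inner_sub_eq_integral hS0 hSadd hScont hx v ht
  have h3 : ‖∫ s in (0:ℝ)..t, ⟪S s v, z⟫‖ ≤ M * ‖v‖ * ‖z‖ * |t - 0| := by
    refine intervalIntegral.norm_integral_le_of_norm_le_const (fun s hs => ?_)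
    rw [Set.uIoc_of_le ht] at hs
    have hb : ‖S s v‖ ≤ M * ‖v‖ := by
      calc ‖S s v‖ ≤ ‖S s‖ * ‖v‖ := (S s).le_opNorm v
      _ ≤ M * ‖v‖ := by
        have := hM s ⟨hs.1.le, hs.2⟩
        exact mul_le_mul_of_nonneg_right this (norm_nonneg v)
    calc ‖⟪S s v, z⟫‖ ≤ ‖S s v‖ * ‖z‖ := by
          simpa using abs_real_inner_le_norm (S s v) z
      _ ≤ M * ‖v‖ * ‖z‖ := mul_le_mul_of_nonneg_right hb (norm_nonneg z)
  have h4 : ‖v‖ ^ 2 ≤ M * ‖v‖ * ‖z‖ * t := by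
    have : ⟪v, v⟫ ≤ M * ‖v‖ * ‖z‖ * t := by
      calc ⟪v, v⟫ ≤ ‖∫ s in (0:ℝ)..t, ⟪S s v, z⟫‖ := by
            rw [h2]; exact le_abs_self _
        _ ≤ M * ‖v‖ * ‖z‖ * |t - 0| := h3
        _ = M * ‖v‖ * ‖z‖ * t := by rw [sub_zero, abs_of_nonneg ht]
    calc ‖v‖^2 = ⟪v, v⟫ := (real_inner_self_eq_norm_sq v).symm
      _ ≤ _ := this
  rcases eq_or_lt_of_le (norm_nonneg v) with h | h
  · rw [← h]; positivity
  · have := h4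
    nlinarith [this, h]

lemma genTo_zero : genTo S 0 0 := by
  have h : (fun t : ℝ => t⁻¹ • (S t (0:H) - 0)) = fun _ => (0:H) := by
    funext t; simp
  rw [genTo, h]
  exact tendsto_const_nhds

lemma genTo_add {x y x' y' : H} (h : genTo S x y) (h' : genTo S x' y') :
    genTo S (x + x') (y + y') := by
  refine (h.add h').congr fun t => ?_
  simp only [map_add, smul_sub, smul_add]
  abel

lemma genTo_smul (c : ℝ) {x y : H} (h : genTo S x y) : genTo S (c • x) (c • y) := by
  refine (h.const_smul c).congr fun t => ?_
  simp only [_root_.map_smul]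
  module

def graphSub (S : ℝ → H →L[ℝ] H) : Submodule ℝ (WithLp 2 (H × H)) where
  carrier := {p | genTo S p.fst p.snd}
  add_mem' := fun ha hb => genTo_add ha hb
  zero_mem' := genTo_zero
  smul_mem' := fun c _ hp => genTo_smul c hp

lemma mem_graphSub {p : WithLp 2 (H × H)} : p ∈ graphSub S ↔ genTo S p.fst p.snd := Iff.rfl

lemma mem_graphSub_orth {q : WithLp 2 (H × H)} :
    q ∈ (graphSub S)ᗮ ↔ adjTo S q.snd (-q.fst) := by
  rw [Submodule.mem_orthogonal]
  constructor
  · intro h y y' hy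
    have h1 := h ((WithLp.equiv 2 (H × H)).symm (y, y')) (by exact hy)
    rw [WithLp.prod_inner_apply] at h1
    have h2 : ⟪y', q.snd⟫ = -⟪y, q.fst⟫ := by
      have : ⟪y, q.fst⟫ + ⟪y', q.snd⟫ = 0 := h1
      linarith
    rw [h2, inner_neg_right]
  · intro h u hu
    rw [WithLp.prod_inner_apply]
    have h1 := h u.fst u.snd hu
    rw [inner_neg_right] at h1
    show ⟪u.fst, q.fst⟫ + ⟪u.snd, q.snd⟫ = 0
    linarith

def domAdj (S : ℝ → H →L[ℝ] H) : Submodule ℝ H where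
  carrier := {x | ∃ z, adjTo S x z}
  zero_mem' := ⟨0, fun y y' _ => by simp⟩
  add_mem' := by
    rintro a b ⟨za, hza⟩ ⟨zb, hzb⟩
    exact ⟨za + zb, fun y y' hy => by
      rw [inner_add_right, inner_add_right, hza y y' hy, hzb y y' hy]⟩
  smul_mem' := by
    rintro c a ⟨za, hza⟩
    exact ⟨c • za, fun y y' hy => by
      rw [real_inner_smul_right, real_inner_smul_right, hza y y' hy]⟩

lemma dense_domAdj
    (hS0 : S 0 = 1)
    (hSadd : ∀ s t : ℝ, 0 ≤ s → 0 ≤ t → S (s + t) = (S s).comp (S t))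
    (hScont : ∀ x : H, ContinuousOn (fun t => S t x) (Set.Ici 0)) :
    Dense (domAdj S : Set H) := by
  rw [Submodule.dense_iff_topologicalClosure_eq_top, Submodule.topologicalClosure_eq_top_iff,
    Submodule.eq_bot_iff]
  intro v hv
  rw [Submodule.mem_orthogonal] at hv
  set p0 : WithLp 2 (H × H) := (WithLp.equiv 2 (H × H)).symm (0, v) with hp0
  have hmem : p0 ∈ ((graphSub S)ᗮ)ᗮ := by
    rw [Submodule.mem_orthogonal]
    intro q hq
    rw [WithLp.prod_inner_apply]
    have h2 := mem_graphSub_orth.1 hq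
    have h3 : ⟪q.snd, v⟫ = 0 := hv q.snd ⟨-q.fst, h2⟩
    show ⟪q.fst, (0:H)⟫ + ⟪q.snd, v⟫ = 0
    simp [h3]
  rw [Submodule.orthogonal_orthogonal_eq_closure] at hmem
  have hmem' : p0 ∈ closure ((graphSub S : Set (WithLp 2 (H × H)))) := hmem
  obtain ⟨u, hu, hconv⟩ := mem_closure_iff_seq_limit.1 hmem'
  have hconv' := ((WithLp.prodContinuousLinearEquiv 2 ℝ H H).continuous.tendsto p0).comp hconv
  have h1 : Tendsto (fun n => (u n).fst) atTop (𝓝 (0:H)) := by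
    have := (continuous_fst.tendsto _).comp hconv'
    exact this
  have h2 : Tendsto (fun n => (u n).snd) atTop (𝓝 v) := by
    have := (continuous_snd.tendsto _).comp hconv'
    exact this
  obtain ⟨M, hM1, hM⟩ := exists_bound hScont 1
  have key : ∀ t ∈ Set.Icc (0:ℝ) 1, (∫ s in (0:ℝ)..t, S s v) = 0 := by
    intro t ht
    have heq : ∀ n, S t (u n).fst - (u n).fst = ∫ s in (0:ℝ)..t, S s ((u n).snd) :=
      fun n => sub_eq_integral hS0 hSadd hScont (hu n) ht.1
    have hL : Tendsto (fun n => S t ((u n).fst) - (u n).fst) atTop (𝓝 (0:H)) := by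
      have hh := ((S t).continuous.tendsto 0).comp h1
      simp only [map_zero, Function.comp] at hh
      simpa using hh.sub h1
    have hR : Tendsto (fun n => ∫ s in (0:ℝ)..t, S s ((u n).snd)) atTop
        (𝓝 (∫ s in (0:ℝ)..t, S s v)) := by
      rw [← tendsto_sub_nhds_zero_iff]
      refine squeeze_zero_norm (a := fun n => M * ‖(u n).snd - v‖) (fun n => ?_) ?_
      · 
        have hsub : (∫ s in (0:ℝ)..t, S s ((u n).snd)) - (∫ s in (0:ℝ)..t, S s v)
            = ∫ s in (0:ℝ)..t, S s ((u n).snd - v) := by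
          rw [← intervalIntegral.integral_sub
            (intervalIntegrable_of_continuousOn (hScont _) le_rfl ht.1)
            (intervalIntegrable_of_continuousOn (hScont _) le_rfl ht.1)]
          exact intervalIntegral.integral_congr (fun s _ => (map_sub (S s) _ _).symm)
        rw [hsub]
        have hb := intervalIntegral.norm_integral_le_of_norm_le_const
          (C := M * ‖(u n).snd - v‖) (f := fun s => S s ((u n).snd - v)) (a := 0) (b := t) ?_
        · calc ‖∫ s in (0:ℝ)..t, S s ((u n).snd - v)‖ ≤ M * ‖(u n).snd - v‖ * |t - 0| := hb
            _ ≤ M * ‖(u n).snd - v‖ * 1 := by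
              apply mul_le_mul_of_nonneg_left _ (by positivity)
              rw [sub_zero, abs_of_nonneg ht.1]; exact ht.2
            _ = M * ‖(u n).snd - v‖ := mul_one _
        · intro s hs
          rw [Set.uIoc_of_le ht.1] at hs
          calc ‖S s ((u n).snd - v)‖ ≤ ‖S s‖ * ‖(u n).snd - v‖ := (S s).le_opNorm _
            _ ≤ M * ‖(u n).snd - v‖ := mul_le_mul_of_nonneg_right
                (hM s ⟨hs.1.le, le_trans hs.2 ht.2⟩) (norm_nonneg _)
      · have : Tendsto (fun n => ‖(u n).snd - v‖) atTop (𝓝 0) := by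
          rw [← tendsto_zero_iff_norm_tendsto_zero]
          rw [← tendsto_sub_nhds_zero_iff] at h2
          exact h2
        simpa using this.const_mul M
    exact tendsto_nhds_unique (hR.congr (fun n => (heq n).symm)) hL
  have hfin : Tendsto (fun h : ℝ => h⁻¹ • ((∫ s in (0:ℝ)..(0+h), S s v) - ∫ s in (0:ℝ)..(0:ℝ), S s v))
      (𝓝[>] (0:ℝ)) (𝓝 (S 0 v)) := tendsto_slope_integral (hScont v) le_rfl
  have hzero : Tendsto (fun _ : ℝ => (0:H)) (𝓝[>] (0:ℝ)) (𝓝 (S 0 v)) := by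
    refine hfin.congr' ?_
    filter_upwards [Ioo_mem_nhdsGT_of_mem (Set.mem_Ico.2 ⟨le_rfl, zero_lt_one⟩)] with h hh
    rw [zero_add, key h ⟨hh.1.le, hh.2.le⟩, intervalIntegral.integral_same]
    simp
  have : S 0 v = 0 := tendsto_nhds_unique hzero tendsto_const_nhds
  rw [hS0] at this
  simpa using this

lemma adjoint_add
    (hSadd : ∀ s t : ℝ, 0 ≤ s → 0 ≤ t → S (s + t) = (S s).comp (S t))
    {s t : ℝ} (hs : 0 ≤ s) (ht : 0 ≤ t) :
    ContinuousLinearMap.adjoint (S (s + t))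
      = (ContinuousLinearMap.adjoint (S t)).comp (ContinuousLinearMap.adjoint (S s)) := by
  rw [hSadd s t hs ht, ContinuousLinearMap.adjoint_comp]

lemma adjoint_norm_le {t M : ℝ} (h : ‖S t‖ ≤ M) : ‖ContinuousLinearMap.adjoint (S t)‖ ≤ M := by
  rw [LinearIsometryEquiv.norm_map (ContinuousLinearMap.adjoint (E := H) (F := H)) (S t)]
  exact h

lemma adjoint_zero (hS0 : S 0 = 1) : ContinuousLinearMap.adjoint (S 0) = 1 := by
  rw [hS0]
  exact ContinuousLinearMap.adjoint_id

lemma adjoint_tendsto_zero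
    (hS0 : S 0 = 1)
    (hSadd : ∀ s t : ℝ, 0 ≤ s → 0 ≤ t → S (s + t) = (S s).comp (S t))
    (hScont : ∀ x : H, ContinuousOn (fun t => S t x) (Set.Ici 0)) (v : H) :
    Tendsto (fun t => ContinuousLinearMap.adjoint (S t) v) (𝓝[Set.Ici 0] (0:ℝ)) (𝓝 v) := by
  obtain ⟨M, hM1, hM⟩ := exists_bound hScont 1
  rw [Metric.tendsto_nhdsWithin_nhds]
  intro ε hε
  have hM0 : (0:ℝ) < M := lt_of_lt_of_le zero_lt_one hM1
  obtain ⟨u, hu, hdist⟩ := (dense_domAdj hS0 hSadd hScont).exists_dist_lt v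
    (show (0:ℝ) < ε / (3 * M) by positivity)
  obtain ⟨z, hz⟩ := hu
  refine ⟨min 1 (ε / (3 * (M * ‖z‖ + 1))), by positivity, ?_⟩
  intro t ht hd
  rw [Real.dist_eq, sub_zero, abs_of_nonneg ht] at hd
  have ht1 : t ≤ 1 := le_trans hd.le (min_le_left _ _)
  have hMt : ∀ s ∈ Set.Icc (0:ℝ) t, ‖S s‖ ≤ M :=
    fun s hs => hM s ⟨hs.1, le_trans hs.2 ht1⟩
  have hTnorm : ‖ContinuousLinearMap.adjoint (S t)‖ ≤ M := adjoint_norm_le (hM t ⟨ht, ht1⟩)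
  have e1 : ‖ContinuousLinearMap.adjoint (S t) (v - u)‖ ≤ M * ‖v - u‖ :=
    le_trans ((ContinuousLinearMap.adjoint (S t)).le_opNorm _)
      (mul_le_mul_of_nonneg_right hTnorm (norm_nonneg _))
  have e2 : ‖ContinuousLinearMap.adjoint (S t) u - u‖ ≤ M * ‖z‖ * t :=
    adjoint_sub_norm hS0 hSadd hScont hz ht hM0.le hMt
  rw [dist_eq_norm]
  have hvu : ‖v - u‖ < ε / (3 * M) := by rwa [dist_eq_norm] at hdist
  have split : ContinuousLinearMap.adjoint (S t) v - v
      = ContinuousLinearMap.adjoint (S t) (v - u)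
        + (ContinuousLinearMap.adjoint (S t) u - u) + (u - v) := by
    rw [map_sub]; abel
  have base : ‖ContinuousLinearMap.adjoint (S t) v - v‖
      ≤ M * ‖v - u‖ + M * ‖z‖ * t + ‖v - u‖ := by
    rw [split]
    calc ‖_ + _ + (u - v)‖
        ≤ ‖ContinuousLinearMap.adjoint (S t) (v - u)
            + (ContinuousLinearMap.adjoint (S t) u - u)‖ + ‖u - v‖ := norm_add_le _ _
      _ ≤ ‖ContinuousLinearMap.adjoint (S t) (v - u)‖
            + ‖ContinuousLinearMap.adjoint (S t) u - u‖ + ‖u - v‖ := by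
          gcongr; exact norm_add_le _ _
      _ ≤ M * ‖v - u‖ + M * ‖z‖ * t + ‖v - u‖ := by
          rw [norm_sub_rev u v]; gcongr
  have b1 : M * ‖v - u‖ < ε / 3 := by
    calc M * ‖v - u‖ < M * (ε / (3 * M)) := (mul_lt_mul_iff_right₀ hM0).2 hvu
      _ = ε / 3 := by field_simp
  have b2 : ‖v - u‖ < ε / 3 :=
    lt_of_le_of_lt (le_mul_of_one_le_left (norm_nonneg _) hM1) b1
  have hz0 : (0:ℝ) ≤ M * ‖z‖ := by positivity
  have hd0 : (0:ℝ) < ε / (3 * (M * ‖z‖ + 1)) := by positivity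
  have h3 : t < ε / (3 * (M * ‖z‖ + 1)) := lt_of_lt_of_le hd (min_le_right _ _)
  have b3 : M * ‖z‖ * t < ε / 3 := by
    have e1' : M * ‖z‖ * t ≤ M * ‖z‖ * (ε / (3 * (M * ‖z‖ + 1))) :=
      mul_le_mul_of_nonneg_left h3.le hz0
    have e2' : (M * ‖z‖ + 1) * (ε / (3 * (M * ‖z‖ + 1))) = ε / 3 := by
      field_simp
    nlinarith [hd0, hz0]
  linarith [base, b1, b2, b3]

lemma adjoint_continuousOn
    (hS0 : S 0 = 1)
    (hSadd : ∀ s t : ℝ, 0 ≤ s → 0 ≤ t → S (s + t) = (S s).comp (S t))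
    (hScont : ∀ x : H, ContinuousOn (fun t => S t x) (Set.Ici 0)) (v : H) :
    ContinuousOn (fun t => ContinuousLinearMap.adjoint (S t) v) (Set.Ici 0) := by
  intro t₀ ht₀
  obtain ⟨M, hM1, hM⟩ := exists_bound hScont (t₀ + 1)
  have hM0 : (0:ℝ) < M := lt_of_lt_of_le zero_lt_one hM1
  show Tendsto (fun t => ContinuousLinearMap.adjoint (S t) v) (𝓝[Set.Ici 0] t₀)
      (𝓝 (ContinuousLinearMap.adjoint (S t₀) v))
  rw [← tendsto_sub_nhds_zero_iff]
  have hbound : ∀ t ∈ Set.Ici (0:ℝ) ∩ Set.Iio (t₀ + 1),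
      ‖ContinuousLinearMap.adjoint (S t) v - ContinuousLinearMap.adjoint (S t₀) v‖
        ≤ M * ‖ContinuousLinearMap.adjoint (S |t - t₀|) v - v‖ := by
    intro t ⟨ht, ht'⟩
    rcases le_total t₀ t with hle | hle
    · have habs : |t - t₀| = t - t₀ := abs_of_nonneg (by linarith)
      have hcomp : ContinuousLinearMap.adjoint (S t)
          = (ContinuousLinearMap.adjoint (S t₀)).comp
              (ContinuousLinearMap.adjoint (S (t - t₀))) := by
        have := adjoint_add (S := S) hSadd (s := t - t₀) (t := t₀) (by linarith) ht₀
        rwa [show t - t₀ + t₀ = t by ring] at this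
      have : ContinuousLinearMap.adjoint (S t) v - ContinuousLinearMap.adjoint (S t₀) v
          = ContinuousLinearMap.adjoint (S t₀)
              (ContinuousLinearMap.adjoint (S (t - t₀)) v - v) := by
        rw [hcomp, map_sub]; rfl
      rw [this, habs]
      refine le_trans ((ContinuousLinearMap.adjoint (S t₀)).le_opNorm _) ?_
      exact mul_le_mul_of_nonneg_right
        (adjoint_norm_le (hM t₀ ⟨ht₀, by linarith⟩)) (norm_nonneg _)
    · have habs : |t - t₀| = t₀ - t := by rw [abs_sub_comm]; exact abs_of_nonneg (by linarith)
      have hcomp : ContinuousLinearMap.adjoint (S t₀)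
          = (ContinuousLinearMap.adjoint (S t)).comp
              (ContinuousLinearMap.adjoint (S (t₀ - t))) := by
        have := adjoint_add (S := S) hSadd (s := t₀ - t) (t := t) (by linarith) ht
        rwa [show t₀ - t + t = t₀ by ring] at this
      have : ContinuousLinearMap.adjoint (S t) v - ContinuousLinearMap.adjoint (S t₀) v
          = ContinuousLinearMap.adjoint (S t)
              (v - ContinuousLinearMap.adjoint (S (t₀ - t)) v) := by
        rw [hcomp, map_sub]; rfl
      rw [this, habs]
      refine le_trans ((ContinuousLinearMap.adjoint (S t)).le_opNorm _) ?_
      rw [norm_sub_rev]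
      exact mul_le_mul_of_nonneg_right
        (adjoint_norm_le (hM t ⟨ht, ht'.le⟩)) (norm_nonneg _)
  have habs_tendsto : Tendsto (fun t => |t - t₀|) (𝓝[Set.Ici 0] t₀) (𝓝[Set.Ici 0] (0:ℝ)) := by
    refine tendsto_nhdsWithin_of_tendsto_nhds_of_eventually_within _ ?_ ?_
    · have h : Tendsto (fun t : ℝ => |t - t₀|) (𝓝 t₀) (𝓝 |t₀ - t₀|) :=
        ((continuous_id.sub continuous_const).abs.tendsto t₀)
      simpa using h.mono_left nhdsWithin_le_nhds
    · exact Filter.Eventually.of_forall (fun t => Set.mem_Ici.2 (abs_nonneg _))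
  have hTabs : Tendsto (fun t => ContinuousLinearMap.adjoint (S |t - t₀|) v - v)
      (𝓝[Set.Ici 0] t₀) (𝓝 0) := by
    have := (adjoint_tendsto_zero hS0 hSadd hScont v).comp habs_tendsto
    rw [show (0:H) = v - v by simp]
    exact this.sub tendsto_const_nhds
  have hgz : Tendsto (fun t => M * ‖ContinuousLinearMap.adjoint (S |t - t₀|) v - v‖)
      (𝓝[Set.Ici 0] t₀) (𝓝 0) := by
    have hn := tendsto_zero_iff_norm_tendsto_zero.1 hTabs
    simpa using hn.const_mul M
  refine squeeze_zero_norm' ?_ hgz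
  have h1 : ∀ᶠ t in 𝓝[Set.Ici 0] t₀, t ∈ Set.Ici (0:ℝ) := eventually_mem_nhdsWithin
  have h2 : ∀ᶠ t in 𝓝[Set.Ici 0] t₀, t < t₀ + 1 :=
    Filter.Eventually.filter_mono nhdsWithin_le_nhds (gt_mem_nhds (by linarith))
  filter_upwards [h1, h2] with t hta htb
  exact hbound t ⟨hta, htb⟩

lemma adjoint_sub_eq_integral
    (hS0 : S 0 = 1)
    (hSadd : ∀ s t : ℝ, 0 ≤ s → 0 ≤ t → S (s + t) = (S s).comp (S t))
    (hScont : ∀ x : H, ContinuousOn (fun t => S t x) (Set.Ici 0))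
    {x z : H} (hx : adjTo S x z) {t : ℝ} (ht : 0 ≤ t) :
    ContinuousLinearMap.adjoint (S t) x - x
      = ∫ s in (0:ℝ)..t, ContinuousLinearMap.adjoint (S s) z := by
  have hTc : ContinuousOn (fun s => ContinuousLinearMap.adjoint (S s) z) (Set.Ici 0) :=
    adjoint_continuousOn hS0 hSadd hScont z
  have hint : IntervalIntegrable (fun s => ContinuousLinearMap.adjoint (S s) z) volume 0 t :=
    intervalIntegrable_of_continuousOn hTc le_rfl ht
  refine ext_inner_left ℝ (fun y => ?_)
  rw [inner_sub_right (𝕜 := ℝ), ContinuousLinearMap.adjoint_inner_right]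
  have h4 := inner_sub_eq_integral hS0 hSadd hScont hx y ht
  rw [inner_sub_left (𝕜 := ℝ)] at h4
  rw [h4]
  have hc := (innerSL ℝ y).intervalIntegral_comp_comm hint
  simp only [innerSL_apply_apply] at hc
  rw [← hc]
  exact intervalIntegral.integral_congr
    (fun s _ => ((ContinuousLinearMap.adjoint_inner_right (S s) y z)).symm)

lemma adjoint_genTo_slope
    (hS0 : S 0 = 1)
    (hSadd : ∀ s t : ℝ, 0 ≤ s → 0 ≤ t → S (s + t) = (S s).comp (S t))
    (hScont : ∀ x : H, ContinuousOn (fun t => S t x) (Set.Ici 0))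
    {x z : H} (hx : adjTo S x z) :
    Tendsto (fun t : ℝ => t⁻¹ • (ContinuousLinearMap.adjoint (S t) x - x))
      (𝓝[>] (0:ℝ)) (𝓝 z) := by
  have hTc : ContinuousOn (fun s => ContinuousLinearMap.adjoint (S s) z) (Set.Ici 0) :=
    adjoint_continuousOn hS0 hSadd hScont z
  have h := tendsto_slope_integral hTc (le_refl (0:ℝ))
  rw [show ContinuousLinearMap.adjoint (S 0) z = z by rw [adjoint_zero hS0]; rfl] at h
  refine h.congr' ?_
  filter_upwards [eventually_mem_nhdsWithin] with t htp
  rw [zero_add, intervalIntegral.integral_same, sub_zero,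
    ← adjoint_sub_eq_integral hS0 hSadd hScont hx (le_of_lt htp)]

lemma genTo_S
    (hSadd : ∀ s t : ℝ, 0 ≤ s → 0 ≤ t → S (s + t) = (S s).comp (S t))
    {y y' : H} (h : genTo S y y') {t : ℝ} (ht : 0 ≤ t) : genTo S (S t y) (S t y') := by
  have h2 := ((S t).continuous.tendsto y').comp h
  refine h2.congr' ?_
  filter_upwards [eventually_mem_nhdsWithin] with u hu
  have hco : S u (S t y) = S t (S u y) := by
    have e1 := hSadd u t (le_of_lt hu) ht
    have e2 := hSadd t u ht (le_of_lt hu)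
    rw [show t + u = u + t by ring] at e2
    rw [e1] at e2
    calc S u (S t y) = ((S u).comp (S t)) y := rfl
      _ = ((S t).comp (S u)) y := by rw [← e2]
      _ = S t (S u y) := rfl
  show S t (u⁻¹ • (S u y - y)) = u⁻¹ • (S u (S t y) - S t y)
  rw [hco, _root_.map_smul, map_sub]

lemma adjTo_adjoint
    (hSadd : ∀ s t : ℝ, 0 ≤ s → 0 ≤ t → S (s + t) = (S s).comp (S t))
    {x z : H} (hx : adjTo S x z) {t : ℝ} (ht : 0 ≤ t) :
    adjTo S (ContinuousLinearMap.adjoint (S t) x) (ContinuousLinearMap.adjoint (S t) z) := by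
  intro y y' hy
  rw [ContinuousLinearMap.adjoint_inner_right, ContinuousLinearMap.adjoint_inner_right]
  exact hx _ _ (genTo_S hSadd hy ht)

lemma tendsto_S_apply
    (hScont : ∀ x : H, ContinuousOn (fun t => S t x) (Set.Ici 0))
    {α : Type*} {l : Filter α} {u : α → ℝ} {v : α → H} {a : ℝ} {w : H} (ha : 0 ≤ a)
    (hu : Tendsto u l (𝓝[Set.Ici 0] a)) (hv : Tendsto v l (𝓝 w)) :
    Tendsto (fun i => S (u i) (v i)) l (𝓝 (S a w)) := by
  obtain ⟨M, hM1, hM⟩ := exists_bound hScont (a + 1)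
  rw [← tendsto_sub_nhds_zero_iff]
  have h1 : Tendsto (fun i => S (u i) w) l (𝓝 (S a w)) := by
    exact ((hScont w a ha).tendsto).comp hu
  have h2 : Tendsto (fun i => ‖S (u i) w - S a w‖ + M * ‖v i - w‖) l (𝓝 0) := by
    have ha' := tendsto_zero_iff_norm_tendsto_zero.1 (tendsto_sub_nhds_zero_iff.2 h1)
    have hb' : Tendsto (fun i => M * ‖v i - w‖) l (𝓝 0) := by
      have := tendsto_zero_iff_norm_tendsto_zero.1 (tendsto_sub_nhds_zero_iff.2 hv)
      simpa using this.const_mul M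
    simpa using ha'.add hb'
  refine squeeze_zero_norm' ?_ h2
  have hev1 : ∀ᶠ i in l, u i ∈ Set.Ici (0:ℝ) := hu eventually_mem_nhdsWithin
  have hev2 : ∀ᶠ i in l, u i < a + 1 :=
    hu (Filter.Eventually.filter_mono nhdsWithin_le_nhds (gt_mem_nhds (by linarith)))
  filter_upwards [hev1, hev2] with i hi1 hi2
  have hsplit : S (u i) (v i) - S a w = S (u i) (v i - w) + (S (u i) w - S a w) := by
    rw [map_sub]; abel
  rw [hsplit]
  calc ‖S (u i) (v i - w) + (S (u i) w - S a w)‖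
      ≤ ‖S (u i) (v i - w)‖ + ‖S (u i) w - S a w‖ := norm_add_le _ _
    _ ≤ M * ‖v i - w‖ + ‖S (u i) w - S a w‖ := by
        gcongr
        refine le_trans ((S (u i)).le_opNorm _) ?_
        exact mul_le_mul_of_nonneg_right (hM _ ⟨hi1, hi2.le⟩) (norm_nonneg _)
    _ = ‖S (u i) w - S a w‖ + M * ‖v i - w‖ := by ring

lemma main_key
    (hS0 : S 0 = 1)
    (hSadd : ∀ s t : ℝ, 0 ≤ s → 0 ≤ t → S (s + t) = (S s).comp (S t))
    (hScont : ∀ x : H, ContinuousOn (fun t => S t x) (Set.Ici 0))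
    (Q : H →L[ℝ] H)
    (ha : ∀ x z : H, adjTo S x z → genTo S (Q x) (Q z))
    {t : ℝ} (ht : 0 ≤ t) {x z : H} (hxz : adjTo S x z) :
    S t (Q x) = Q (ContinuousLinearMap.adjoint (S t) x) := by
  rcases eq_or_lt_of_le ht with rfl | htpos
  · rw [adjoint_zero hS0, hS0]; rfl
  set T : ℝ → H →L[ℝ] H := fun s => ContinuousLinearMap.adjoint (S s) with hT
  set φ : ℝ → H := fun s => S (t - s) (Q (T s x)) with hφ
  have hTx : ∀ s, 0 ≤ s → adjTo S (T s x) (T s z) := fun s hs => adjTo_adjoint hSadd hxz hs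
  have hgen : ∀ s, 0 ≤ s → genTo S (Q (T s x)) (Q (T s z)) := fun s hs => ha _ _ (hTx s hs)
  have hTcx : ContinuousOn (fun s => T s x) (Set.Ici 0) :=
    adjoint_continuousOn hS0 hSadd hScont x
  have hTcz : ContinuousOn (fun s => T s z) (Set.Ici 0) :=
    adjoint_continuousOn hS0 hSadd hScont z
  have hφc : ContinuousOn φ (Set.Icc 0 t) := by
    intro s₀ hs₀
    have hu : Tendsto (fun s => t - s) (𝓝[Set.Icc 0 t] s₀) (𝓝[Set.Ici 0] (t - s₀)) := by
      refine tendsto_nhdsWithin_of_tendsto_nhds_of_eventually_within _ ?_ ?_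
      · exact ((continuous_const.sub continuous_id).tendsto s₀).mono_left nhdsWithin_le_nhds
      · filter_upwards [eventually_mem_nhdsWithin] with s hs
        exact Set.mem_Ici.2 (sub_nonneg.2 hs.2)
    have hv : Tendsto (fun s => Q (T s x)) (𝓝[Set.Icc 0 t] s₀) (𝓝 (Q (T s₀ x))) := by
      have hcw : ContinuousWithinAt (fun s => T s x) (Set.Icc 0 t) s₀ :=
        (hTcx.mono (fun s hs => hs.1)) s₀ hs₀
      exact (Q.continuous.tendsto _).comp hcw
    exact tendsto_S_apply hScont (sub_nonneg.2 hs₀.2) hu hv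
  have hderiv : ∀ s ∈ Set.Ioo (0:ℝ) t, HasDerivWithinAt φ 0 (Set.Ioi s) s := by
    intro s hs
    rw [hasDerivWithinAt_iff_tendsto_slope,
      Set.diff_singleton_eq_self (by simp : s ∉ Set.Ioi s)]
    have hB : Tendsto (fun u => (u - s)⁻¹ • (Q (T u x) - S (u - s) (Q (T s x))))
        (𝓝[>] s) (𝓝 0) := by
      have hB1 : Tendsto (fun u => (u - s)⁻¹ • (Q (T u x) - Q (T s x)))
          (𝓝[>] s) (𝓝 (Q (T s z))) := by
        have h0 := tendsto_slope_integral hTcz hs.1.le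
        have hslope := h0.comp (tendsto_sub_right s)
        have hslope' : Tendsto (fun u => (u - s)⁻¹ •
            ((∫ r in (0:ℝ)..u, T r z) - ∫ r in (0:ℝ)..s, T r z)) (𝓝[>] s) (𝓝 (T s z)) := by
          refine hslope.congr fun u => ?_
          simp [Function.comp]
        have hq := (Q.continuous.tendsto _).comp hslope'
        refine hq.congr' ?_
        filter_upwards [eventually_mem_nhdsWithin] with u hu
        have hu0 : (0:ℝ) ≤ u := le_trans hs.1.le (le_of_lt hu)
        have e1 : T u x - x = ∫ r in (0:ℝ)..u, T r z :=
          adjoint_sub_eq_integral hS0 hSadd hScont hxz hu0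
        have e2 : T s x - x = ∫ r in (0:ℝ)..s, T r z :=
          adjoint_sub_eq_integral hS0 hSadd hScont hxz hs.1.le
        have e3 : (∫ r in (0:ℝ)..u, T r z) - ∫ r in (0:ℝ)..s, T r z = T u x - T s x := by
          rw [← e1, ← e2]; abel
        show Q ((u - s)⁻¹ • ((∫ r in (0:ℝ)..u, T r z) - ∫ r in (0:ℝ)..s, T r z))
            = (u - s)⁻¹ • (Q (T u x) - Q (T s x))
        rw [e3, _root_.map_smul, map_sub]
      have hB2 : Tendsto (fun u => (u - s)⁻¹ • (S (u - s) (Q (T s x)) - Q (T s x)))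
          (𝓝[>] s) (𝓝 (Q (T s z))) := (hgen s hs.1.le).comp (tendsto_sub_right s)
      have hsub := hB1.sub hB2
      rw [sub_self] at hsub
      refine hsub.congr fun u => ?_
      module
    obtain ⟨M, hM1, hM⟩ := exists_bound hScont t
    have hg0 : Tendsto (fun u => M * ‖(u - s)⁻¹ • (Q (T u x) - S (u - s) (Q (T s x)))‖)
        (𝓝[>] s) (𝓝 0) := by
      have hn := tendsto_zero_iff_norm_tendsto_zero.1 hB
      simpa using hn.const_mul M
    refine squeeze_zero_norm' ?_ hg0
    filter_upwards [Ioo_mem_nhdsGT_of_mem (Set.mem_Ico.2 ⟨le_rfl, hs.2⟩)] with u hu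
    have hus : (0:ℝ) < u - s := sub_pos.2 hu.1
    have hut : (0:ℝ) ≤ t - u := sub_nonneg.2 hu.2.le
    have hφs : φ s = S (t - u) (S (u - s) (Q (T s x))) := by
      have hadd := hSadd (t - u) (u - s) hut hus.le
      rw [show t - u + (u - s) = t - s by ring] at hadd
      show S (t - s) (Q (T s x)) = _
      rw [hadd]; rfl
    have hslope_eq : slope φ s u
        = S (t - u) ((u - s)⁻¹ • (Q (T u x) - S (u - s) (Q (T s x)))) := by
      rw [slope_def_module, hφs, _root_.map_smul, map_sub]
    rw [hslope_eq]
    refine le_trans ((S (t - u)).le_opNorm _) ?_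
    refine mul_le_mul_of_nonneg_right (hM _ ⟨hut, by linarith [hu.1, hs.1]⟩) (norm_nonneg _)
  have hint0 : IntervalIntegrable (fun _ : ℝ => (0:H)) volume 0 t := intervalIntegrable_const
  have hFTC := intervalIntegral.integral_eq_sub_of_hasDeriv_right_of_le ht hφc hderiv hint0
  have hφtφ0 : φ t = φ 0 := by
    have h0 : φ t - φ 0 = 0 := by simpa using hFTC.symm
    exact sub_eq_zero.1 h0
  have hφt : φ t = Q (T t x) := by
    show S (t - t) (Q (T t x)) = Q (T t x)
    rw [sub_self, hS0]; rfl
  have hφ0 : φ 0 = S t (Q x) := by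
    have hT0 : T 0 = 1 := adjoint_zero hS0
    show S (t - 0) (Q (T 0 x)) = S t (Q x)
    rw [sub_zero, hT0]
    rfl
  rw [← hφ0, ← hφtφ0, hφt]

end C0Aux

theorem statement0 [TopologicalSpace.SeparableSpace H]
    (S : ℝ → H →L[ℝ] H)
    (hS0 : S 0 = 1)
    (hSadd : ∀ s t : ℝ, 0 ≤ s → 0 ≤ t → S (s + t) = (S s).comp (S t))
    (hScont : ∀ x : H, ContinuousOn (fun t => S t x) (Set.Ici 0))
    (Q : H →L[ℝ] H) (hQsa : IsSelfAdjoint Q) (hQnn : ∀ x : H, 0 ≤ ⟪Q x, x⟫) :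
    (∀ x z : H, adjTo S x z → genTo S (Q x) (Q z)) ↔
      (∀ t : ℝ, 0 ≤ t → (S t).comp Q = Q.comp (ContinuousLinearMap.adjoint (S t))) := by
  constructor
  · intro ha t ht
    have key : ∀ x ∈ (C0Aux.domAdj S : Set H),
        (fun v => S t (Q v)) x
          = (fun v => Q (ContinuousLinearMap.adjoint (S t) v)) x := by
      rintro x ⟨z, hz⟩
      exact C0Aux.main_key hS0 hSadd hScont Q ha ht hz
    have hdense := C0Aux.dense_domAdj hS0 hSadd hScont
    have hfg : (fun v => S t (Q v)) = (fun v => Q (ContinuousLinearMap.adjoint (S t) v)) :=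
      Continuous.ext_on hdense ((S t).continuous.comp Q.continuous)
        (Q.continuous.comp (ContinuousLinearMap.adjoint (S t)).continuous) key
    exact ContinuousLinearMap.ext fun v => congrFun hfg v
  · intro hb x z hx
    have h9 := C0Aux.adjoint_genTo_slope hS0 hSadd hScont hx
    have hq := (Q.continuous.tendsto z).comp h9
    refine hq.congr' ?_
    filter_upwards [eventually_mem_nhdsWithin] with t htp
    have happ : S t (Q x) = Q (ContinuousLinearMap.adjoint (S t) x) :=
      ContinuousLinearMap.ext_iff.1 (hb t (le_of_lt htp)) x
    show Q (t⁻¹ • (ContinuousLinearMap.adjoint (S t) x - x)) = t⁻¹ • (S t (Q x) - Q x)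
    rw [happ, _root_.map_smul, map_sub]
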